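/- Let G = K₄ be the complete graph on four vertices V, let T = V, fix t̂ ∈ V, and let x : E(K₄) → ℝ be the vector with x_e = 1/2 for every edge e. Then for every τ > 1/2, the family 𝓛 of T-odd τ-narrow subsets of V∖{t̂} (with respect to x) contains the three singletons {v} for v ∈ V∖{t̂} and the set V∖{t̂}, and there do NOT exist vectors f^U : E → ℝ for U ∈ 𝓛 satisfying simultaneously: f^U ≥ 0 for all U ∈ 𝓛, ∑_{U∈𝓛} f^U ≤ x componentwise, and f^U(δ(U)) ≥ 1 for all U ∈ 𝓛. -/

import Mathlib

open Finset
open scoped Classical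

variable {V : Type*}

/-- `x(δ(U))`: the total `x`-value of the edges of `G` with exactly one endpoint in `U`. -/
noncomputable def xCut [Fintype V] [DecidableEq V] (G : SimpleGraph V)
    (x : Sym2 V → ℝ) (U : Finset V) : ℝ :=
  ∑ u ∈ U, ∑ w ∈ Uᶜ, if G.Adj u w then x s(u, w) else 0

lemma xCut_le_sum [Fintype V] [DecidableEq V] (G : SimpleGraph V) [Fintype G.edgeSet]
    (f : Sym2 V → ℝ) (hf : ∀ e, 0 ≤ f e) (U : Finset V) :
    xCut G f U ≤ ∑ e ∈ G.edgeFinset, f e := by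
  classical
  have h1 : xCut G f U
      = ∑ p ∈ (U ×ˢ Uᶜ).filter (fun p => G.Adj p.1 p.2), f s(p.1, p.2) := by
    rw [xCut, ← Finset.sum_product', Finset.sum_filter]
  have hinj : Set.InjOn (fun p : V × V => s(p.1, p.2))
      ((U ×ˢ Uᶜ).filter (fun p => G.Adj p.1 p.2)) := by
    intro p hp q hq h
    simp only [coe_filter, Set.mem_setOf_eq, mem_product, mem_compl] at hp hq
    rw [Sym2.eq_iff] at h
    rcases h with ⟨h1, h2⟩ | ⟨h1, h2⟩
    · exact Prod.ext h1 h2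
    · exact absurd (h1 ▸ hp.1.1) hq.1.2
  rw [h1, ← Finset.sum_image hinj]
  apply Finset.sum_le_sum_of_subset_of_nonneg
  · intro e he
    simp only [Finset.mem_image] at he
    obtain ⟨p, hp, rfl⟩ := he
    simp only [Finset.mem_filter] at hp
    simpa [SimpleGraph.mem_edgeFinset] using hp.2
  · intro e _ _; exact hf e

lemma xCut_half (U : Finset (Fin 4)) :
    xCut (⊤ : SimpleGraph (Fin 4)) (fun _ => (1 : ℝ) / 2) U
      = U.card * Uᶜ.card / 2 := by
  have h2 : xCut (⊤ : SimpleGraph (Fin 4)) (fun _ => (1 : ℝ) / 2) U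
      = ∑ _u ∈ U, (Uᶜ.card : ℝ) * (1 / 2) := by
    refine Finset.sum_congr rfl fun u hu => ?_
    beta_reduce
    have hp : ∀ w ∈ Uᶜ, (⊤ : SimpleGraph (Fin 4)).Adj u w := by
      intro w hw
      simp only [SimpleGraph.top_adj]
      intro h; subst h; exact (Finset.mem_compl.mp hw) hu
    refine (Finset.sum_congr rfl fun w hw => ?_).trans (b := ∑ _w ∈ Uᶜ, (1 : ℝ) / 2) ?_
    · simp [hp w hw]
    · rw [Finset.sum_const, nsmul_eq_mul]
  rw [h2, Finset.sum_const, nsmul_eq_mul]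
  ring

/-- The family of `T`-odd `τ`-narrow subsets of `V ∖ {t̂}` for the complete graph `K₄`
with `T = V` and the all-(1/2) edge vector. -/
noncomputable def narrowFam (τ : ℝ) (that : Fin 4) : Finset (Finset (Fin 4)) :=
  (univ : Finset (Finset (Fin 4))).filter
    (fun S => S ⊆ univ.erase that ∧ Odd ((S ∩ (univ : Finset (Fin 4))).card) ∧
      xCut (⊤ : SimpleGraph (Fin 4)) (fun _ => (1 : ℝ) / 2) S < 1 + τ)

theorem stmt14 (that : Fin 4) (τ : ℝ) (hτ : 1 / 2 < τ) :
    (∀ v : Fin 4, v ≠ that → ({v} : Finset (Fin 4)) ∈ narrowFam τ that) ∧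
    ((univ : Finset (Fin 4)).erase that ∈ narrowFam τ that) ∧
    ¬ ∃ f : Finset (Fin 4) → Sym2 (Fin 4) → ℝ,
        (∀ U ∈ narrowFam τ that, ∀ e, 0 ≤ f U e) ∧
        (∀ e ∈ (⊤ : SimpleGraph (Fin 4)).edgeSet,
          ∑ U ∈ narrowFam τ that, f U e ≤ (1 : ℝ) / 2) ∧
        (∀ U ∈ narrowFam τ that, 1 ≤ xCut (⊤ : SimpleGraph (Fin 4)) (f U) U) := by
  have p1 : ∀ v : Fin 4, v ≠ that → ({v} : Finset (Fin 4)) ∈ narrowFam τ that := by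
    intro v hv
    simp only [narrowFam, mem_filter, mem_univ, true_and]
    refine ⟨singleton_subset_iff.mpr (mem_erase.mpr ⟨hv, mem_univ v⟩), ?_, ?_⟩
    · simp
    · rw [xCut_half]
      rw [card_compl, card_singleton]
      simp only [Fintype.card_fin]
      norm_num
      linarith
  have p2 : (univ : Finset (Fin 4)).erase that ∈ narrowFam τ that := by
    simp only [narrowFam, mem_filter, mem_univ, true_and]
    refine ⟨Finset.Subset.refl _, ?_, ?_⟩
    · rw [Finset.inter_univ, card_erase_of_mem (mem_univ _)]
      simp; decide
    · rw [xCut_half]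
      rw [card_compl, card_erase_of_mem (mem_univ _)]
      simp only [Fintype.card_fin]
      norm_num
      linarith
  refine ⟨p1, p2, ?_⟩
  rintro ⟨f, hnn, hle, hcut⟩
  have hub : ∑ U ∈ narrowFam τ that, xCut (⊤ : SimpleGraph (Fin 4)) (f U) U ≤ 3 := by
    have h1 : ∑ U ∈ narrowFam τ that, xCut (⊤ : SimpleGraph (Fin 4)) (f U) U
        ≤ ∑ U ∈ narrowFam τ that, ∑ e ∈ (⊤ : SimpleGraph (Fin 4)).edgeFinset, f U e :=
      Finset.sum_le_sum fun U hU => xCut_le_sum _ _ (hnn U hU) _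
    have h2 : ∑ U ∈ narrowFam τ that, ∑ e ∈ (⊤ : SimpleGraph (Fin 4)).edgeFinset, f U e
        = ∑ e ∈ (⊤ : SimpleGraph (Fin 4)).edgeFinset, ∑ U ∈ narrowFam τ that, f U e :=
      Finset.sum_comm
    have h3 : ∑ e ∈ (⊤ : SimpleGraph (Fin 4)).edgeFinset, ∑ U ∈ narrowFam τ that, f U e
        ≤ ∑ _e ∈ (⊤ : SimpleGraph (Fin 4)).edgeFinset, (1 : ℝ) / 2 :=
      Finset.sum_le_sum fun e he => hle e (SimpleGraph.mem_edgeFinset.mp he)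
    have h4 : ((⊤ : SimpleGraph (Fin 4)).edgeFinset.card) = 6 := by
      rw [SimpleGraph.card_edgeFinset_top_eq_card_choose_two]
      decide
    rw [Finset.sum_const, h4, nsmul_eq_mul] at h3
    push_cast at h3
    linarith
  have hlb : (4 : ℝ) ≤ ∑ U ∈ narrowFam τ that, xCut (⊤ : SimpleGraph (Fin 4)) (f U) U := by
    have hsub : insert ((univ : Finset (Fin 4)).erase that)
        (((univ : Finset (Fin 4)).erase that).image fun v => ({v} : Finset (Fin 4)))
        ⊆ narrowFam τ that := by
      intro S hS
      rcases Finset.mem_insert.mp hS with rfl | h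
      · exact p2
      · obtain ⟨v, hv, rfl⟩ := Finset.mem_image.mp h
        exact p1 v (Finset.mem_erase.mp hv).1
    have hcardS : (insert ((univ : Finset (Fin 4)).erase that)
        (((univ : Finset (Fin 4)).erase that).image fun v => ({v} : Finset (Fin 4)))).card = 4 := by
      rw [Finset.card_insert_of_notMem, Finset.card_image_of_injective _ Finset.singleton_injective,
        card_erase_of_mem (mem_univ _)]
      · simp
      · intro h
        obtain ⟨v, hv, he⟩ := Finset.mem_image.mp h
        have := congrArg Finset.card he
        rw [card_singleton, card_erase_of_mem (mem_univ _)] at this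
        simp at this
    have hcard : 4 ≤ (narrowFam τ that).card := by
      have h5 := Finset.card_le_card hsub
      omega
    calc (4 : ℝ) ≤ ((narrowFam τ that).card : ℝ) := by exact_mod_cast hcard
      _ = ∑ _U ∈ narrowFam τ that, (1 : ℝ) := by simp
      _ ≤ _ := Finset.sum_le_sum fun U hU => hcut U hU
  linarith
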